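/- Let a = (a_n) be a strictly decreasing sequence of positive reals converging to 0, and let b = (b_ω)_{ω∈Ω*} be a gauge with b̄_n = sup_{|ω|=n} b_ω. If Σ_{k≥n} b̄_k = o(a_n), then the Hilbert brick H_b is a compact subset of the Banach space C^a(Ω). -/

import Mathlib

open Filter Set MeasureTheory

abbrev Omega : Type := ℕ → Bool

def shift (x : Omega) : Omega := fun n => x (n + 1)

open Classical in
/-- The metric `d_a` on `Ω`: distance `a m` where `m` is the first disagreement. -/
noncomputable def dA (a : ℕ → ℝ) (x y : Omega) : ℝ :=
  if h : x = y then 0 else a (Nat.find (Function.ne_iff.mp h))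

/-- A strictly decreasing sequence of positive reals converging to zero. -/
structure GoodSeq where
  a : ℕ → ℝ
  pos : ∀ n, 0 < a n
  anti : StrictAnti a
  lim : Tendsto a atTop (nhds 0)

/-- Membership in `C^a(Ω)`: Lipschitz with respect to the metric `d_a`. -/
def MemCa (a : ℕ → ℝ) (f : Omega → ℝ) : Prop :=
  ∃ K : ℝ, ∀ x y, |f x - f y| ≤ K * dA a x y

def lipSet (a : ℕ → ℝ) (f : Omega → ℝ) : Set ℝ :=
  {K | 0 ≤ K ∧ ∀ x y, |f x - f y| ≤ K * dA a x y}

/-- The least Lipschitz constant w.r.t. `d_a`. -/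
noncomputable def lipA (a : ℕ → ℝ) (f : Omega → ℝ) : ℝ := sInf (lipSet a f)

/-- The norm of `C^a(Ω)`: sup norm plus least Lipschitz constant. -/
noncomputable def caNorm (a : ℕ → ℝ) (f : Omega → ℝ) : ℝ := (⨆ x, |f x|) + lipA a f

lemma dA_self (a : ℕ → ℝ) (x : Omega) : dA a x x = 0 := by
  unfold dA; exact dif_pos rfl

lemma dA_pos (p : GoodSeq) {x y : Omega} (hxy : x ≠ y) : 0 < dA p.a x y := by
  unfold dA; rw [dif_neg hxy]; exact p.pos _

lemma dA_nonneg (p : GoodSeq) (x y : Omega) : 0 ≤ dA p.a x y := by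
  unfold dA; split
  · exact le_rfl
  · exact (p.pos _).le

lemma dA_le_a0 (p : GoodSeq) (x y : Omega) : dA p.a x y ≤ p.a 0 := by
  unfold dA; split
  · exact (p.pos 0).le
  · exact p.anti.antitone (Nat.zero_le _)

lemma lipSet_nonempty (p : GoodSeq) {f : Omega → ℝ} (hf : MemCa p.a f) :
    (lipSet p.a f).Nonempty := by
  obtain ⟨K, hK⟩ := hf
  exact ⟨max K 0, le_max_right _ _, fun x y => (hK x y).trans
    (mul_le_mul_of_nonneg_right (le_max_left _ _) (dA_nonneg p x y))⟩

lemma lipSet_bddBelow (a : ℕ → ℝ) (f : Omega → ℝ) : BddBelow (lipSet a f) :=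
  ⟨0, fun _ hK => hK.1⟩

lemma lipA_nonneg (p : GoodSeq) {f : Omega → ℝ} (hf : MemCa p.a f) : 0 ≤ lipA p.a f :=
  le_csInf (lipSet_nonempty p hf) fun _ hK => hK.1

lemma lipA_le (p : GoodSeq) {f : Omega → ℝ} {K : ℝ} (hK : K ∈ lipSet p.a f) :
    lipA p.a f ≤ K := csInf_le (lipSet_bddBelow _ _) hK

lemma lipA_spec (p : GoodSeq) {f : Omega → ℝ} (hf : MemCa p.a f) (x y : Omega) :
    |f x - f y| ≤ lipA p.a f * dA p.a x y := by
  rcases eq_or_ne x y with rfl | hxy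
  · simp [dA_self]
  · have hd : 0 < dA p.a x y := dA_pos p hxy
    have h1 : |f x - f y| / dA p.a x y ≤ lipA p.a f :=
      le_csInf (lipSet_nonempty p hf) (fun K hK => (div_le_iff₀ hd).2 (hK.2 x y))
    calc |f x - f y| = |f x - f y| / dA p.a x y * dA p.a x y := by field_simp
      _ ≤ _ := mul_le_mul_of_nonneg_right h1 hd.le

lemma bddAbove_abs (p : GoodSeq) {f : Omega → ℝ} (hf : MemCa p.a f) :
    BddAbove (Set.range fun x => |f x|) := by
  refine ⟨|f (fun _ => false)| + lipA p.a f * p.a 0, ?_⟩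
  rintro r ⟨x, rfl⟩
  have h1 : |f x| ≤ |f (fun _ => false)| + |f x - f (fun _ => false)| := by
    have := abs_add_le (f (fun _ => false)) (f x - f (fun _ => false))
    simpa using this
  refine h1.trans (add_le_add le_rfl ?_)
  refine (lipA_spec p hf x _).trans ?_
  exact mul_le_mul_of_nonneg_left (dA_le_a0 p _ _) (lipA_nonneg p hf)

lemma le_caSup (p : GoodSeq) {f : Omega → ℝ} (hf : MemCa p.a f) (x : Omega) :
    |f x| ≤ ⨆ y, |f y| := le_ciSup (bddAbove_abs p hf) x

/-- The Lipschitz functions form a linear subspace of `Ω → ℝ`. -/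
noncomputable def caSub (a : ℕ → ℝ) : Submodule ℝ (Omega → ℝ) where
  carrier := {f | MemCa a f}
  add_mem' := by
    rintro f g ⟨K, hK⟩ ⟨L, hL⟩
    refine ⟨K + L, fun x y => ?_⟩
    calc |(f + g) x - (f + g) y| = |(f x - f y) + (g x - g y)| := by
          simp only [Pi.add_apply]; ring_nf
      _ ≤ |f x - f y| + |g x - g y| := abs_add_le _ _
      _ ≤ K * dA a x y + L * dA a x y := add_le_add (hK x y) (hL x y)
      _ = (K + L) * dA a x y := by ring
  zero_mem' := ⟨0, by simp⟩
  smul_mem' := by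
    rintro c f ⟨K, hK⟩
    refine ⟨|c| * K, fun x y => ?_⟩
    calc |(c • f) x - (c • f) y| = |c| * |f x - f y| := by
          simp only [Pi.smul_apply, smul_eq_mul]
          rw [← abs_mul]; ring_nf
      _ ≤ |c| * (K * dA a x y) := mul_le_mul_of_nonneg_left (hK x y) (abs_nonneg c)
      _ = |c| * K * dA a x y := by ring

/-- The Banach space `C^a(Ω)` of `d_a`-Lipschitz functions. -/
def CaSpace (p : GoodSeq) : Type := ↥(caSub p.a)

noncomputable instance (p : GoodSeq) : AddCommGroup (CaSpace p) :=
  inferInstanceAs (AddCommGroup ↥(caSub p.a))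

noncomputable instance (p : GoodSeq) : Module ℝ (CaSpace p) :=
  inferInstanceAs (Module ℝ ↥(caSub p.a))

/-- The underlying function of an element of `C^a(Ω)`. -/
def CaSpace.fn {p : GoodSeq} (F : CaSpace p) : Omega → ℝ := Subtype.val F

lemma CaSpace.memCa {p : GoodSeq} (F : CaSpace p) : MemCa p.a F.fn := Subtype.prop F

lemma lipA_zero (p : GoodSeq) : lipA p.a 0 = 0 := by
  refine le_antisymm (lipA_le p ⟨le_rfl, fun x y => by simp [dA_nonneg]⟩)
    (lipA_nonneg p ⟨0, by simp⟩)

lemma abs_neg_sub (f : Omega → ℝ) (x y : Omega) : |(-f) x - (-f) y| = |f x - f y| := by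
  simp only [Pi.neg_apply]
  rw [show -f x - -f y = -(f x - f y) by ring, abs_neg]

lemma lipSet_neg (a : ℕ → ℝ) (f : Omega → ℝ) : lipSet a (-f) = lipSet a f := by
  ext K
  constructor <;> intro h <;> refine ⟨h.1, fun x y => ?_⟩
  · have := h.2 x y
    rwa [abs_neg_sub] at this
  · have := h.2 x y
    rw [abs_neg_sub]
    exact this

/-- The Lipschitz norm on `C^a(Ω)` as an `AddGroupNorm`. -/
noncomputable def caAGN (p : GoodSeq) : AddGroupNorm (CaSpace p) where
  toFun F := caNorm p.a F.fn
  map_zero' := by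
    show caNorm p.a (0 : CaSpace p).fn = 0
    have h0 : (0 : CaSpace p).fn = (0 : Omega → ℝ) := rfl
    rw [h0]
    unfold caNorm
    rw [lipA_zero]
    simp
  add_le' F G := by
    show caNorm p.a (F + G).fn ≤ caNorm p.a F.fn + caNorm p.a G.fn
    have hadd : (F + G).fn = F.fn + G.fn := rfl
    unfold caNorm
    rw [hadd]
    have h1 : (⨆ x, |(F.fn + G.fn) x|) ≤ (⨆ x, |F.fn x|) + ⨆ x, |G.fn x| := by
      refine ciSup_le fun x => ?_
      calc |(F.fn + G.fn) x| ≤ |F.fn x| + |G.fn x| := abs_add_le _ _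
        _ ≤ _ := add_le_add (le_caSup p F.memCa x) (le_caSup p G.memCa x)
    have h2 : lipA p.a (F.fn + G.fn) ≤ lipA p.a F.fn + lipA p.a G.fn := by
      refine lipA_le p ⟨add_nonneg (lipA_nonneg p F.memCa) (lipA_nonneg p G.memCa),
        fun x y => ?_⟩
      calc |(F.fn + G.fn) x - (F.fn + G.fn) y|
          = |(F.fn x - F.fn y) + (G.fn x - G.fn y)| := by
            simp only [Pi.add_apply]; ring_nf
        _ ≤ |F.fn x - F.fn y| + |G.fn x - G.fn y| := abs_add_le _ _
        _ ≤ lipA p.a F.fn * dA p.a x y + lipA p.a G.fn * dA p.a x y :=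
            add_le_add (lipA_spec p F.memCa x y) (lipA_spec p G.memCa x y)
        _ = (lipA p.a F.fn + lipA p.a G.fn) * dA p.a x y := by ring
    linarith
  neg' F := by
    show caNorm p.a (-F).fn = caNorm p.a F.fn
    have hneg : (-F).fn = -(F.fn) := rfl
    unfold caNorm
    rw [hneg]
    congr 1
    · exact iSup_congr fun x => by simp
    · unfold lipA; rw [lipSet_neg]
  eq_zero_of_map_eq_zero' F h := by
    have h' : caNorm p.a F.fn = 0 := h
    have hsup0 : 0 ≤ ⨆ x, |F.fn x| :=
      le_trans (abs_nonneg _) (le_caSup p F.memCa (fun _ => false))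
    have hlip0 := lipA_nonneg p F.memCa
    unfold caNorm at h'
    have hsup : (⨆ x, |F.fn x|) = 0 := by linarith
    have hz : ∀ x, F.fn x = 0 := by
      intro x
      have := le_caSup p F.memCa x
      rw [hsup] at this
      exact abs_nonpos_iff.mp this
    exact Subtype.ext (funext hz)

noncomputable instance (p : GoodSeq) : NormedAddCommGroup (CaSpace p) :=
  (caAGN p).toNormedAddCommGroup

noncomputable instance (p : GoodSeq) : MeasurableSpace (CaSpace p) := borel (CaSpace p)

/-- The Haar function `h_ω = (χ_{[ω0]} − χ_{[ω1]})/2` for a finite word `ω`. -/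
noncomputable def haar (w : List Bool) (x : Omega) : ℝ :=
  if ∀ i : Fin w.length, x (i : ℕ) = w.get i then
    (if x w.length = false then 1 / 2 else -(1 / 2)) else 0

/-- `b̄_n = max_{|ω|=n} b_ω`. -/
noncomputable def gaugeMax (b : List Bool → ℝ) (n : ℕ) : ℝ :=
  sSup {r | ∃ w : List Bool, w.length = n ∧ r = b w}

/-- prefix of `x` of length `n` -/
def xpre (x : Omega) (n : ℕ) : List Bool := List.ofFn fun i : Fin n => x i

@[simp] lemma xpre_length (x : Omega) (n : ℕ) : (xpre x n).length = n := List.length_ofFn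

lemma xpre_injective (x : Omega) : Function.Injective (xpre x) := fun m n h => by
  rw [← xpre_length x m, h, xpre_length]

lemma haar_xpre (x : Omega) (n : ℕ) :
    haar (xpre x n) x = if x n = false then 1 / 2 else -(1 / 2) := by
  unfold haar
  rw [if_pos, xpre_length]
  intro i
  simp [xpre]
  obtain ⟨j, hj⟩ := i
  simp [xpre]

lemma abs_haar_xpre (x : Omega) (n : ℕ) : |haar (xpre x n) x| ≤ 1 / 2 := by
  rw [haar_xpre]
  split
  · rw [abs_of_nonneg] <;> norm_num
  · rw [abs_neg, abs_of_nonneg] <;> norm_num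

lemma haar_eq_zero {w : List Bool} {x : Omega} (h : w ≠ xpre x w.length) : haar w x = 0 := by
  unfold haar
  rw [if_neg]
  intro hc
  apply h
  apply List.ext_getElem (by simp)
  intro i hi1 hi2
  have := hc ⟨i, hi1⟩
  simp only [List.get_eq_getElem] at this
  simp [xpre, ← this]

lemma haar_off_range {w : List Bool} {x : Omega} (h : w ∉ Set.range (xpre x)) :
    haar w x = 0 :=
  haar_eq_zero (fun hc => h ⟨w.length, hc.symm⟩)

noncomputable def gfun (c : List Bool → ℝ) (x : Omega) (n : ℕ) : ℝ :=
  c (xpre x n) * haar (xpre x n) x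

lemma beta_nonneg {c : List Bool → ℝ} {β : ℕ → ℝ}
    (hβ : ∀ w, |c w| ≤ β w.length) (n : ℕ) : 0 ≤ β n :=
  le_trans (abs_nonneg _) (by simpa using hβ (xpre (fun _ => false) n))

lemma abs_gfun_le_half {c : List Bool → ℝ} {β : ℕ → ℝ}
    (hβ : ∀ w, |c w| ≤ β w.length) (x : Omega) (n : ℕ) : |gfun c x n| ≤ β n / 2 := by
  have h1 : |c (xpre x n)| ≤ β n := by simpa using hβ (xpre x n)
  have h2 := abs_haar_xpre x n
  have h0 : 0 ≤ β n := beta_nonneg hβ n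
  calc |gfun c x n| = |c (xpre x n)| * |haar (xpre x n) x| := abs_mul _ _
    _ ≤ β n * (1 / 2) := mul_le_mul h1 h2 (abs_nonneg _) h0
    _ = β n / 2 := by ring

lemma abs_gfun_le {c : List Bool → ℝ} {β : ℕ → ℝ}
    (hβ : ∀ w, |c w| ≤ β w.length) (x : Omega) (n : ℕ) : |gfun c x n| ≤ β n := by
  have h0 : 0 ≤ β n := beta_nonneg hβ n
  linarith [abs_gfun_le_half hβ x n]

lemma summable_gfun {c : List Bool → ℝ} {β : ℕ → ℝ}
    (hβ : ∀ w, |c w| ≤ β w.length) (hβs : Summable β) (x : Omega) :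
    Summable (gfun c x) :=
  Summable.of_abs (hβs.of_nonneg_of_le (fun _ => abs_nonneg _) (abs_gfun_le hβ x))

noncomputable def Fc (c : List Bool → ℝ) (x : Omega) : ℝ := ∑' n, gfun c x n

lemma hasSum_haar {c : List Bool → ℝ} {β : ℕ → ℝ}
    (hβ : ∀ w, |c w| ≤ β w.length) (hβs : Summable β) (x : Omega) :
    HasSum (fun w : List Bool => c w * haar w x) (Fc c x) := by
  have hinj := xpre_injective x
  have hvan : ∀ w ∉ Set.range (xpre x), c w * haar w x = 0 := fun w hw => by
    rw [haar_off_range hw, mul_zero]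
  rw [← hinj.hasSum_iff hvan]
  exact (summable_gfun hβ hβs x).hasSum

lemma gfun_congr {c : List Bool → ℝ} {x y : Omega} {n : ℕ}
    (hxy : ∀ k, k ≤ n → x k = y k) : gfun c x n = gfun c y n := by
  have hp : xpre x n = xpre y n :=
    congrArg List.ofFn (funext fun i => hxy i (le_of_lt i.2))
  unfold gfun
  rw [haar_xpre, hp, haar_xpre, hxy n le_rfl]

lemma summable_shift {β : ℕ → ℝ} (hβs : Summable β) (m : ℕ) :
    Summable (fun k => β (m + k)) := by
  have := (summable_nat_add_iff m).2 hβs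
  exact this.congr (fun k => by rw [add_comm])

lemma abs_Fc_le {c : List Bool → ℝ} {β : ℕ → ℝ}
    (hβ : ∀ w, |c w| ≤ β w.length) (hβs : Summable β) (x : Omega) :
    |Fc c x| ≤ ∑' n, β n := by
  have h1 : Summable (fun n => |gfun c x n|) :=
    hβs.of_nonneg_of_le (fun _ => abs_nonneg _) (abs_gfun_le hβ x)
  calc |Fc c x| ≤ ∑' n, |gfun c x n| := by
        simpa [Real.norm_eq_abs, Fc] using norm_tsum_le_tsum_norm (f := gfun c x) h1
    _ ≤ ∑' n, β n := Summable.tsum_le_tsum (fun n => abs_gfun_le hβ x n) h1 hβs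

lemma key_est {c : List Bool → ℝ} {β : ℕ → ℝ}
    (hβ : ∀ w, |c w| ≤ β w.length) (hβs : Summable β)
    (x y : Omega) (m : ℕ) (hm : ∀ k, k < m → x k = y k) :
    |Fc c x - Fc c y| ≤ ∑' k, β (m + k) := by
  set h : ℕ → ℝ := fun n => gfun c x n - gfun c y n with hdef
  have hx := summable_gfun hβ hβs x
  have hy := summable_gfun hβ hβs y
  have hsum : Summable h := hx.sub hy
  have hsub : Fc c x - Fc c y = ∑' n, h n := (Summable.tsum_sub hx hy).symm
  have hzero : ∀ n, n < m → h n = 0 := fun n hn =>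
    sub_eq_zero.2 (gfun_congr (fun k hk => hm k (lt_of_le_of_lt hk hn)))
  have habs : ∀ n, |h n| ≤ β n := fun n => by
    have h1 := abs_gfun_le_half hβ x n
    have h2 := abs_gfun_le_half hβ y n
    calc |h n| ≤ |gfun c x n| + |gfun c y n| := abs_sub _ _
      _ ≤ β n := by linarith
  have hsumabs : Summable (fun n => |h n|) :=
    hβs.of_nonneg_of_le (fun _ => abs_nonneg _) habs
  have step1 : |Fc c x - Fc c y| ≤ ∑' n, |h n| := by
    rw [hsub]
    simpa [Real.norm_eq_abs] using norm_tsum_le_tsum_norm (f := h) hsumabs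
  have step2 : ∑' n, |h n| = ∑' k, |h (k + m)| := by
    rw [← Summable.sum_add_tsum_nat_add m hsumabs]
    rw [Finset.sum_eq_zero (fun i hi => by
      rw [hzero i (Finset.mem_range.mp hi), abs_zero]), zero_add]
  have step3 : ∑' k, |h (k + m)| ≤ ∑' k, β (m + k) :=
    Summable.tsum_le_tsum (fun k => by rw [add_comm k m]; exact habs (m + k))
      ((summable_nat_add_iff m).2 hsumabs) (summable_shift hβs m)
  linarith

lemma gaugeSet_bddAbove (b : List Bool → ℝ) (n : ℕ) :
    BddAbove {r | ∃ w : List Bool, w.length = n ∧ r = b w} := by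
  have : {r | ∃ w : List Bool, w.length = n ∧ r = b w}
      = b '' {w : List Bool | w.length = n} := by
    ext r
    simp [Set.mem_image, eq_comm]
  rw [this]
  exact ((List.finite_length_eq Bool n).image b).bddAbove

lemma le_gaugeMax (b : List Bool → ℝ) (w : List Bool) : b w ≤ gaugeMax b w.length :=
  le_csSup (gaugeSet_bddAbove b w.length) ⟨w, rfl, rfl⟩

lemma gaugeMax_nonneg {b : List Bool → ℝ} (hbpos : ∀ w, 0 < b w) (n : ℕ) :
    0 ≤ gaugeMax b n := by
  have := le_gaugeMax b (List.replicate n false)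
  simp only [List.length_replicate] at this
  exact le_trans (hbpos _).le this

lemma exists_global_bound (p : GoodSeq) (T : ℕ → ℝ) (hT : ∀ n, 0 ≤ T n)
    (h : ∀ᶠ n in atTop, T n ≤ p.a n) : ∃ K, 0 ≤ K ∧ ∀ n, T n ≤ K * p.a n := by
  obtain ⟨N, hN⟩ := eventually_atTop.1 h
  have hsnn : 0 ≤ ∑ m ∈ Finset.range N, T m / p.a m :=
    Finset.sum_nonneg fun m _ => div_nonneg (hT m) (p.pos m).le
  refine ⟨1 + ∑ m ∈ Finset.range N, T m / p.a m, by linarith, fun n => ?_⟩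
  by_cases hn : N ≤ n
  · have h1 := hN n hn
    have h2 := p.pos n
    nlinarith
  · push_neg at hn
    have h1 : T n / p.a n ≤ ∑ m ∈ Finset.range N, T m / p.a m :=
      Finset.single_le_sum (fun m _ => div_nonneg (hT m) (p.pos m).le)
        (Finset.mem_range.2 hn)
    have h2 : T n / p.a n ≤ 1 + ∑ m ∈ Finset.range N, T m / p.a m := by linarith
    have h3 := p.pos n
    calc T n = T n / p.a n * p.a n := by field_simp
      _ ≤ (1 + ∑ m ∈ Finset.range N, T m / p.a m) * p.a n :=
        mul_le_mul_of_nonneg_right h2 h3.le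

lemma memCa_Fc (p : GoodSeq) (b : List Bool → ℝ) (hbpos : ∀ w, 0 < b w)
    (hbsum : Summable (gaugeMax b))
    (htail : (fun n => ∑' k : ℕ, gaugeMax b (n + k)) =o[atTop] p.a)
    (c : List Bool → ℝ) (hc : ∀ w, |c w| ≤ gaugeMax b w.length) :
    MemCa p.a (Fc c) := by
  set T : ℕ → ℝ := fun n => ∑' k : ℕ, gaugeMax b (n + k) with hTdef
  have hTnn : ∀ n, 0 ≤ T n := fun n => tsum_nonneg fun k => gaugeMax_nonneg hbpos _
  have hev : ∀ᶠ n in atTop, T n ≤ p.a n := by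
    filter_upwards [htail.def one_pos] with n hn
    rwa [Real.norm_eq_abs, Real.norm_eq_abs, abs_of_nonneg (hTnn n),
      abs_of_nonneg (p.pos n).le, one_mul] at hn
  obtain ⟨K, hK0, hK⟩ := exists_global_bound p T hTnn hev
  refine ⟨K, fun x y => ?_⟩
  rcases eq_or_ne x y with rfl | hxy
  · simp [dA_self]
  · have hne := Function.ne_iff.mp hxy
    unfold dA
    rw [dif_neg hxy]
    exact le_trans (key_est hc hbsum x y (Nat.find hne)
      (fun k hk => not_not.mp (Nat.find_min hne hk))) (hK _)

/-- **Compactness of Hilbert bricks.**  Let `a = (a_n)` be a strictly decreasing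
sequence of positive reals converging to `0`, and let `b = (b_ω)` be a gauge with
`b̄_n = sup_{|ω|=n} b_ω`.  If `Σ_{k ≥ n} b̄_k = o(a_n)`, then the Hilbert brick `H_b`
is a compact subset of the Banach space `C^a(Ω)`. -/

theorem hilbert_brick_compact (p : GoodSeq) (b : List Bool → ℝ) (hbpos : ∀ w, 0 < b w)
    (hbsum : Summable (gaugeMax b))
    (htail : (fun n => ∑' k : ℕ, gaugeMax b (n + k)) =o[atTop] p.a) :
    IsCompact {F : CaSpace p | ∃ c : List Bool → ℝ, (∀ w, |c w| ≤ b w) ∧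
      ∀ x, HasSum (fun w : List Bool => c w * haar w x) (F.fn x)} := by
  classical
  have hgM : ∀ n, 0 ≤ gaugeMax b n := gaugeMax_nonneg hbpos
  have hβc : ∀ c : List Bool → ℝ, (∀ w, |c w| ≤ b w) →
      ∀ w, |c w| ≤ gaugeMax b w.length :=
    fun c hc w => (hc w).trans (le_gaugeMax b w)
  have hmem : ∀ c : List Bool → ℝ, (∀ w, |c w| ≤ b w) → MemCa p.a (Fc c) :=
    fun c hc => memCa_Fc p b hbpos hbsum htail c (hβc c hc)
  let Φ : (List Bool → ℝ) → CaSpace p := fun c =>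
    if h : ∀ w, |c w| ≤ b w then ⟨Fc c, hmem c h⟩ else 0
  set S : Set (List Bool → ℝ) := Set.pi Set.univ (fun w => Set.Icc (-(b w)) (b w))
    with hSdef
  have hSmem : ∀ c : List Bool → ℝ, c ∈ S ↔ ∀ w, |c w| ≤ b w := fun c => by
    simp [hSdef, Set.mem_pi, abs_le, Pi.le_def, forall_and]
  have hScomp : IsCompact S := isCompact_univ_pi fun w => isCompact_Icc
  have hΦeq : ∀ (c : List Bool → ℝ) (hc : ∀ w, |c w| ≤ b w),
      Φ c = (⟨Fc c, hmem c hc⟩ : CaSpace p) := fun c hc => dif_pos hc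
  have himg : {F : CaSpace p | ∃ c : List Bool → ℝ, (∀ w, |c w| ≤ b w) ∧
      ∀ x, HasSum (fun w : List Bool => c w * haar w x) (F.fn x)} = Φ '' S := by
    ext F
    constructor
    · rintro ⟨c, hc, hsum⟩
      refine ⟨c, (hSmem c).2 hc, ?_⟩
      have hfn : F.fn = Fc c :=
        funext fun x => (hsum x).unique (hasSum_haar (hβc c hc) hbsum x)
      rw [hΦeq c hc]
      exact Subtype.ext hfn.symm
    · rintro ⟨c, hcS, rfl⟩
      have hc := (hSmem c).1 hcS
      refine ⟨c, hc, fun x => ?_⟩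
      have hfn : (Φ c).fn = Fc c := by
        rw [hΦeq c hc]
        rfl
      rw [hfn]
      exact hasSum_haar (hβc c hc) hbsum x
  rw [himg]
  refine hScomp.image_of_continuousOn ?_
  intro c hcS
  have hc := (hSmem c).1 hcS
  refine Metric.tendsto_nhds.2 fun ε hε => ?_
  -- choose constants
  have ha0 := p.pos 0
  set η := ε / (4 * (1 + p.a 0)) with hηdef
  have hη : 0 < η := by positivity
  set T : ℕ → ℝ := fun n => ∑' k : ℕ, gaugeMax b (n + k) with hTdef
  have hTnn : ∀ n, 0 ≤ T n := fun n => tsum_nonneg fun k => hgM _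
  have hev := htail.def (show (0:ℝ) < η / 4 by positivity)
  obtain ⟨N, hN⟩ := eventually_atTop.1 hev
  have hNle : ∀ n, N ≤ n → T n ≤ η / 4 * p.a n := fun n hn => by
    have := hN n hn
    rwa [Real.norm_eq_abs, Real.norm_eq_abs, abs_of_nonneg (hTnn n),
      abs_of_nonneg (p.pos n).le] at this
  have haN := p.pos N
  set δ := η * p.a N / (4 * ((N : ℝ) + 1)) with hδdef
  have hδ : 0 < δ := by positivity
  set W : Finset (List Bool) := (List.finite_length_lt Bool N).toFinset with hWdef
  have hWmem : ∀ w : List Bool, w ∈ W ↔ w.length < N := fun w => by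
    simp [hWdef]
  have hVn : ∀ᶠ c' in nhds c, ∀ w ∈ W, |c' w - c w| < δ := by
    rw [eventually_all_finset]
    intro w _
    have hcont : Tendsto (fun c' : List Bool → ℝ => c' w) (nhds c) (nhds (c w)) :=
      (continuous_apply w).tendsto c
    filter_upwards [hcont (Metric.ball_mem_nhds (c w) hδ)] with c' hc'
    simp only [Set.mem_preimage, Metric.mem_ball, Real.dist_eq] at hc'
    exact hc'
  have hV : ∀ᶠ c' in nhdsWithin c S, (∀ w ∈ W, |c' w - c w| < δ) ∧ c' ∈ S :=
    (hVn.filter_mono nhdsWithin_le_nhds).and self_mem_nhdsWithin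
  filter_upwards [hV] with c' hpair
  obtain ⟨hclose, hc'S⟩ := hpair
  have hc' := (hSmem c').1 hc'S
  set d : List Bool → ℝ := fun w => c' w - c w with hddef
  set β : ℕ → ℝ := fun n => if n < N then δ else 2 * gaugeMax b n with hβdef
  have hβd : ∀ w, |d w| ≤ β w.length := by
    intro w
    by_cases hw : w.length < N
    · simp only [hβdef, if_pos hw]
      exact le_of_lt (hclose w ((hWmem w).2 hw))
    · simp only [hβdef, if_neg hw]
      have h1 := hc' w
      have h2 := hc w
      have hg := le_gaugeMax b w
      calc |d w| ≤ |c' w| + |c w| := abs_sub _ _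
        _ ≤ 2 * gaugeMax b w.length := by linarith
  have hβs : Summable β := by
    have h2g : Summable (fun n => 2 * gaugeMax b n) := hbsum.mul_left 2
    have hsh := (summable_nat_add_iff (f := fun n => 2 * gaugeMax b n) N).2 h2g
    refine (summable_nat_add_iff N).1 (hsh.congr fun n => ?_)
    simp only [hβdef]
    rw [if_neg (by omega)]
  have hkey : ∀ m, (∑' k : ℕ, β (m + k)) ≤ η * p.a m := by
    intro m
    have hηam : 0 ≤ η * p.a m := mul_nonneg hη.le (p.pos m).le
    by_cases hm : N ≤ m
    · have heq : ∀ k : ℕ, β (m + k) = 2 * gaugeMax b (m + k) := fun k => by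
        simp only [hβdef]
        rw [if_neg (by omega)]
      have hTm := hNle m hm
      calc (∑' k : ℕ, β (m + k)) = ∑' k : ℕ, 2 * gaugeMax b (m + k) := tsum_congr heq
        _ = 2 * T m := tsum_mul_left
        _ ≤ 2 * (η / 4 * p.a m) := by linarith
        _ ≤ η * p.a m := by nlinarith
    · push_neg at hm
      have hs : Summable (fun k => β (m + k)) := summable_shift hβs m
      have split := Summable.sum_add_tsum_nat_add (f := fun k => β (m + k)) (N - m) hs
      have hsum1 : ∑ i ∈ Finset.range (N - m), β (m + i) = (N - m : ℕ) * δ := by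
        rw [Finset.sum_congr rfl (fun i hi => by
          have := Finset.mem_range.mp hi
          simp only [hβdef]
          exact if_pos (by omega))]
        simp [Finset.sum_const, nsmul_eq_mul]
      have hT2 : (∑' i : ℕ, β (m + (i + (N - m)))) = 2 * T N := by
        have e2 : ∀ i : ℕ, β (m + (i + (N - m))) = 2 * gaugeMax b (N + i) := fun i => by
          have he : m + (i + (N - m)) = N + i := by omega
          rw [he]
          simp only [hβdef]
          exact if_neg (by omega)
        rw [tsum_congr e2, hTdef]
        exact tsum_mul_left
      have hval : (∑' k : ℕ, β (m + k)) = (N - m : ℕ) * δ + 2 * T N := by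
        rw [← split, hsum1, hT2]
      rw [hval]
      have hcast : ((N - m : ℕ) : ℝ) ≤ (N : ℝ) + 1 := by
        have h := Nat.sub_le N m
        have := Nat.cast_le (α := ℝ) |>.2 h
        linarith
      have h1 : ((N - m : ℕ) : ℝ) * δ ≤ η * p.a N / 4 := by
        calc ((N - m : ℕ) : ℝ) * δ ≤ ((N : ℝ) + 1) * δ :=
              mul_le_mul_of_nonneg_right hcast hδ.le
          _ = η * p.a N / 4 := by
              rw [hδdef]
              field_simp
      have hTN := hNle N le_rfl
      have haNm : p.a N ≤ p.a m := p.anti.antitone (le_of_lt hm)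
      have h3 : η * p.a N ≤ η * p.a m := mul_le_mul_of_nonneg_left haNm hη.le
      linarith
  -- the norm estimate
  rw [dist_eq_norm]
  have hfn' : (Φ c' - Φ c).fn = fun x => Fc c' x - Fc c x := by
    rw [hΦeq c' hc', hΦeq c hc]
    rfl
  have hdiff : (fun x => Fc c' x - Fc c x) = Fc d := by
    funext x
    have hg' := summable_gfun (hβc c' hc') hbsum x
    have hg := summable_gfun (hβc c hc) hbsum x
    have : Fc d x = ∑' n, (gfun c' x n - gfun c x n) := by
      refine tsum_congr fun n => ?_
      simp only [gfun, hddef, sub_mul]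
    rw [this, Summable.tsum_sub hg' hg]
    rfl
  have hsup : ∀ x, |Fc d x| ≤ η * p.a 0 := fun x => by
    refine (abs_Fc_le hβd hβs x).trans ?_
    have := hkey 0
    simpa using this
  have hlip : ∀ x y, |Fc d x - Fc d y| ≤ η * dA p.a x y := by
    intro x y
    rcases eq_or_ne x y with rfl | hxy
    · simp [dA_self]
    · have hne := Function.ne_iff.mp hxy
      unfold dA
      rw [dif_neg hxy]
      exact le_trans (key_est hβd hβs x y (Nat.find hne)
        (fun k hk => not_not.mp (Nat.find_min hne hk))) (hkey _)
  have hnorm : ‖Φ c' - Φ c‖ = caNorm p.a ((Φ c' - Φ c).fn) := rfl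
  rw [hnorm, hfn', hdiff]
  unfold caNorm
  have h1 : (⨆ x, |Fc d x|) ≤ η * p.a 0 := ciSup_le hsup
  have h2 : lipA p.a (Fc d) ≤ η := lipA_le p ⟨hη.le, hlip⟩
  have hfin : η * (p.a 0 + 1) = ε / 4 := by
    rw [hηdef]
    field_simp
    ring
  linarith
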